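/- Let U be a finite set with a distinguished root r ∈ U and a parent map pa : U → U with pa(r) = r, such that the simple graph G on U whose edges are {v, pa(v)} for v ≠ r is a tree. Let (Ω, F, P) be a probability space and let (ε_v)_{v ∈ U} be mutually independent real random variables, each square-integrable with mean zero. Given real coefficients (λ_v)_{v ∈ U}, define Z_r = ε_r and Z_v = λ_v Z_{pa(v)} + ε_v for v ≠ r. Then for any two vertices u, v ∈ U, if u = w_0, w_1, …, w_k = v is the unique path in G from u to v, the covariances satisfy Cov(Z_u, Z_v) · ∏_{t=1}^{k−1} Var(Z_{w_t}) = ∏_{t=1}^{k} Cov(Z_{w_{t−1}}, Z_{w_t}). In particular, when all variances are nonzero, the correlation matrix of (Z_v) satisfies the path-product constraint ρ_{uv} = ∏_{e ∈ ph(u,v)} ρ_e of the Gaussian latent tree model on G. -/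

import Mathlib

open MeasureTheory ProbabilityTheory

/-- The covariance of two real random variables with respect to a measure `μ`. -/
noncomputable def covar {Ω : Type*} [MeasurableSpace Ω] (μ : MeasureTheory.Measure Ω)
    (f g : Ω → ℝ) : ℝ :=
  ∫ ω, (f ω - ∫ x, f x ∂μ) * (g ω - ∫ x, g x ∂μ) ∂μ

lemma myIntegrableMul {Ω : Type*} [MeasurableSpace Ω] {μ : Measure Ω} [IsProbabilityMeasure μ]
    {f g : Ω → ℝ} (hf : MemLp f 2 μ) (hg : MemLp g 2 μ) :
    Integrable (fun ω => f ω * g ω) μ := by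
  haveI : ENNReal.HolderTriple 2 2 1 := ⟨by rw [ENNReal.inv_two_add_inv_two, inv_one]⟩
  have h : MemLp (g • f) 1 μ := hf.smul hg
  have := memLp_one_iff_integrable.mp h
  exact this.congr (Filter.Eventually.of_forall fun ω => by simp [smul_eq_mul, mul_comm])

theorem rooted_tree_linear_model_path_product
    {U : Type*} [Fintype U] [DecidableEq U] (r : U) (pa : U → U) (hpar : pa r = r)
    (G : SimpleGraph U) (hGdef : G = SimpleGraph.fromRel (fun a b => a ≠ r ∧ pa a = b))
    (hG : G.IsTree)
    {Ω : Type*} [MeasurableSpace Ω] (μ : MeasureTheory.Measure Ω)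
    [MeasureTheory.IsProbabilityMeasure μ]
    (ε : U → Ω → ℝ)
    (hindep : ProbabilityTheory.iIndepFun ε μ)
    (hL2 : ∀ v : U, MeasureTheory.MemLp (ε v) 2 μ)
    (hmean : ∀ v : U, ∫ ω, ε v ω ∂μ = 0)
    (lam : U → ℝ) (Z : U → Ω → ℝ)
    (hZr : Z r = ε r)
    (hZ : ∀ v : U, v ≠ r → Z v = fun ω => lam v * Z (pa v) ω + ε v ω)
    (u v : U) (huv : u ≠ v) (p : G.Walk u v) (hp : p.IsPath) :
    covar μ (Z u) (Z v) *
        (p.support.tail.dropLast.map (fun w => variance (Z w) μ)).prod =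
      ((p.support.zip p.support.tail).map (fun q => covar μ (Z q.1) (Z q.2))).prod ∧
    ((∀ w : U, variance (Z w) μ ≠ 0) →
      covar μ (Z u) (Z v) /
          (Real.sqrt (variance (Z u) μ) * Real.sqrt (variance (Z v) μ)) =
        ((p.support.zip p.support.tail).map (fun q =>
          covar μ (Z q.1) (Z q.2) /
            (Real.sqrt (variance (Z q.1) μ) * Real.sqrt (variance (Z q.2) μ)))).prod) := by
  classical
  -- adjacency characterization
  have hadj : ∀ a b : U, G.Adj a b → a ≠ b ∧ ((a ≠ r ∧ pa a = b) ∨ (b ≠ r ∧ pa b = a)) := by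
    subst hGdef
    intro a b h
    rw [SimpleGraph.fromRel_adj] at h
    tauto
  -- every vertex reaches the root by iterating the parent map
  have reach : ∀ x : U, ∃ n, pa^[n] x = r := by
    have key : ∀ (a b : U) (q : G.Walk a b), (∃ n, pa^[n] b = r) → ∃ n, pa^[n] a = r := by
      intro a b q
      induction q with
      | nil => exact fun h => h
      | cons h q ih =>
        intro hb
        obtain ⟨n, hn⟩ := ih hb
        rcases hadj _ _ h with ⟨hne, ⟨har, hpa⟩ | ⟨hbr, hpa⟩⟩
        · exact ⟨n + 1, by rw [Function.iterate_succ_apply, hpa, hn]⟩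
        · cases n with
          | zero => exact absurd hn hbr
          | succ m => exact ⟨m, by rw [← hn, Function.iterate_succ_apply, hpa]⟩
    intro x
    obtain ⟨q⟩ := hG.isConnected.preconnected x r
    exact key x r q ⟨0, rfl⟩
  set d : U → ℕ := fun x => Nat.find (reach x) with hd_def
  have hd0 : ∀ x, pa^[d x] x = r := fun x => Nat.find_spec (reach x)
  have hdmin : ∀ x m, pa^[m] x = r → d x ≤ m := fun x m hm => Nat.find_min' (reach x) hm
  have hdr : d r = 0 := Nat.le_zero.mp (hdmin r 0 rfl)
  have hdlt : ∀ x, x ≠ r → d x = d (pa x) + 1 := by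
    intro x hx
    have h1 : d x ≠ 0 := by
      intro h0
      exact hx (by simpa [h0] using hd0 x)
    obtain ⟨n, hn⟩ := Nat.exists_eq_succ_of_ne_zero h1
    have h2 : d (pa x) ≤ n := by
      apply hdmin
      have := hd0 x
      rwa [hn, Function.iterate_succ_apply] at this
    have h3 : d x ≤ d (pa x) + 1 := by
      apply hdmin
      rw [Function.iterate_succ_apply]
      exact hd0 (pa x)
    omega
  have hmono : ∀ x, d (pa x) ≤ d x := by
    intro x
    by_cases hx : x = r
    · subst hx; rw [hpar]
    · rw [hdlt x hx]; omega
  have hdanc : ∀ (x y : U), (∃ k, pa^[k] x = y) → d y ≤ d x := by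
    intro x y ⟨k, hk⟩
    subst hk
    induction k with
    | zero => exact le_rfl
    | succ m ih => rw [Function.iterate_succ_apply']; exact (hmono _).trans ih
  have hA2 : ∀ (x y : U), (∃ k, pa^[k] x = y) ↔ (y = x ∨ ∃ k, pa^[k] (pa x) = y) := by
    intro x y
    constructor
    · rintro ⟨k, hk⟩
      cases k with
      | zero => exact Or.inl hk.symm
      | succ m => exact Or.inr ⟨m, by rwa [Function.iterate_succ_apply] at hk⟩
    · rintro (h | ⟨k, hk⟩)
      · exact ⟨0, h.symm⟩
      · exact ⟨k + 1, by rwa [Function.iterate_succ_apply]⟩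
  have hnotanc : ∀ x : U, x ≠ r → ¬ ∃ k, pa^[k] (pa x) = x := by
    intro x hx h
    have := hdanc _ _ h
    rw [hdlt x hx] at this
    omega
  have hddrop : ∀ (t : ℕ) (x : U), (∀ j < t, pa^[j] x ≠ r) → d x = d (pa^[t] x) + t := by
    intro t
    induction t with
    | zero => intro x _; simp
    | succ t ih =>
      intro x hx
      have hxr : x ≠ r := by simpa using hx 0 (Nat.succ_pos t)
      have h1 := ih (pa x) (fun j hj => by
        rw [← Function.iterate_succ_apply]
        exact hx (j + 1) (by omega))
      rw [hdlt x hxr, h1, Function.iterate_succ_apply]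
      omega
  -- probabilistic basics
  have haes : ∀ x : U, AEStronglyMeasurable (ε x) μ := fun x => (hL2 x).1
  have hepair : ∀ i j : U, i ≠ j → ∫ ω, ε i ω * ε j ω ∂μ = 0 := by
    intro i j hij
    rw [(hindep.indepFun hij).integral_fun_mul_eq_mul_integral (haes i) (haes j), hmean i, hmean j, mul_zero]
  have Zrec : ∀ (n : ℕ) (x : U), d x ≤ n → MemLp (Z x) 2 μ ∧ ∫ ω, Z x ω ∂μ = 0 := by
    intro n
    induction n with
    | zero =>
      intro x hx
      have hxr : x = r := by
        have := hd0 x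
        rw [Nat.le_zero.mp hx] at this
        simpa using this
      rw [hxr, hZr]
      exact ⟨hL2 r, hmean r⟩
    | succ n ih =>
      intro x hx
      by_cases hxr : x = r
      · rw [hxr, hZr]; exact ⟨hL2 r, hmean r⟩
      · have hpa := ih (pa x) (by have := hdlt x hxr; omega)
        rw [hZ x hxr]
        constructor
        · exact (hpa.1.const_mul (lam x)).add (hL2 x)
        · rw [integral_add ((hpa.1.integrable one_le_two).const_mul _)
            ((hL2 x).integrable one_le_two), integral_const_mul, hpa.2, hmean x]
          ring
  have hZL2 : ∀ x : U, MemLp (Z x) 2 μ := fun x => (Zrec (d x) x le_rfl).1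
  have hZmean : ∀ x : U, ∫ ω, Z x ω ∂μ = 0 := fun x => (Zrec (d x) x le_rfl).2
  have covar_eq : ∀ x y : U, covar μ (Z x) (Z y) = ∫ ω, Z x ω * Z y ω ∂μ := by
    intro x y
    have : covar μ (Z x) (Z y)
        = ∫ ω, (Z x ω - ∫ ω', Z x ω' ∂μ) * (Z y ω - ∫ ω', Z y ω' ∂μ) ∂μ := rfl
    rw [this, hZmean x, hZmean y]
    simp
  have var_eq : ∀ x : U, variance (Z x) μ = ∫ ω, Z x ω * Z x ω ∂μ := by
    intro x
    rw [variance_eq_sub (hZL2 x), hZmean x]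
    simp only [pow_two, Pi.pow_apply, mul_zero, sub_zero]
  -- orthogonality of a noise variable against Z at a non-descendant
  have orth : ∀ (i x : U), ¬ (∃ k, pa^[k] x = i) → ∫ ω, ε i ω * Z x ω ∂μ = 0 := by
    have key : ∀ (n : ℕ) (i x : U), d x ≤ n → ¬ (∃ k, pa^[k] x = i) →
        ∫ ω, ε i ω * Z x ω ∂μ = 0 := by
      intro n
      induction n with
      | zero =>
        intro i x hx hanc
        have hxr : x = r := by
          have := hd0 x
          rw [Nat.le_zero.mp hx] at this
          simpa using this
        have hir : i ≠ r := fun h => hanc ⟨0, by simp [hxr, ← h]⟩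
        rw [hxr, hZr]
        exact hepair i r hir
      | succ n ih =>
        intro i x hx hanc
        by_cases hxr : x = r
        · have hir : i ≠ r := fun h => hanc ⟨0, by simp [hxr, ← h]⟩
          rw [hxr, hZr]; exact hepair i r hir
        · have hix : i ≠ x := fun h => hanc ⟨0, h.symm⟩
          have hanc' : ¬ ∃ k, pa^[k] (pa x) = i := by
            intro ⟨k, hk⟩
            exact hanc ⟨k + 1, by rwa [Function.iterate_succ_apply]⟩
          have h1 : Integrable (fun ω => ε i ω * Z (pa x) ω) μ :=
            myIntegrableMul (hL2 i) (hZL2 (pa x))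
          have h2 : Integrable (fun ω => ε i ω * ε x ω) μ :=
            myIntegrableMul (hL2 i) (hL2 x)
          rw [hZ x hxr]
          have heq : (fun ω => ε i ω * (lam x * Z (pa x) ω + ε x ω))
              = fun ω => lam x * (ε i ω * Z (pa x) ω) + ε i ω * ε x ω := by
            funext ω; ring
          show ∫ ω, ε i ω * (lam x * Z (pa x) ω + ε x ω) ∂μ = 0
          rw [heq, integral_add (h1.const_mul _) h2, integral_const_mul,
            ih i (pa x) (by have := hdlt x hxr; omega) hanc',
            hepair i x (fun h => hix h)]
          ring
    exact fun i x => key (d x) i x le_rfl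
  -- unrolling the recursion
  have unroll : ∀ (t : ℕ) (x : U), (∀ j < t, pa^[j] x ≠ r) →
      Z x = fun ω => (∏ j ∈ Finset.range t, lam (pa^[j] x)) * Z (pa^[t] x) ω
        + ∑ k ∈ Finset.range t, (∏ j ∈ Finset.range k, lam (pa^[j] x)) * ε (pa^[k] x) ω := by
    intro t
    induction t with
    | zero => intro x _; funext ω; simp
    | succ t ih =>
      intro x hx
      have hxr : x ≠ r := by simpa using hx 0 (Nat.succ_pos t)
      have hpa := ih (pa x) (fun j hj => by
        rw [← Function.iterate_succ_apply]
        exact hx (j + 1) (by omega))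
      rw [hZ x hxr]
      funext ω
      rw [hpa]
      simp only [Finset.prod_range_succ', Finset.sum_range_succ',
        Function.iterate_succ_apply, Function.iterate_zero_apply, Finset.range_zero,
        Finset.prod_empty, one_mul]
      have hs : ∑ k ∈ Finset.range t,
          (∏ j ∈ Finset.range k, lam (pa^[j] (pa x))) * lam x * ε (pa^[k] (pa x)) ω
          = lam x * ∑ k ∈ Finset.range t,
            (∏ j ∈ Finset.range k, lam (pa^[j] (pa x))) * ε (pa^[k] (pa x)) ω := by
        rw [Finset.mul_sum]
        exact Finset.sum_congr rfl fun k _ => by ring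
      rw [hs]; ring
  -- integral commutes
  have intcomm : ∀ f g : Ω → ℝ, ∫ ω, f ω * g ω ∂μ = ∫ ω, g ω * f ω ∂μ := by
    intro f g
    congr 1
    funext ω
    ring
  -- path lemma T : non-ancestry propagates along a walk avoiding a
  have T : ∀ (a : U) (b c : U) (q : G.Walk b c), a ∉ q.support →
      ¬ (∃ k, pa^[k] b = a) → ¬ (∃ k, pa^[k] c = a) := by
    intro a b c q
    induction q with
    | nil => exact fun _ h => h
    | @cons x y cc h q ih =>
      intro hsup hb
      have hy : a ∉ q.support := fun hmem => hsup (by simp [hmem])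
      apply ih hy
      rcases hadj _ _ h with ⟨hne, ⟨hxr, hpa'⟩ | ⟨hyr, hpa'⟩⟩
      · intro hy'
        exact hb ((hA2 x a).mpr (Or.inr (by rwa [hpa'])))
      · intro hy'
        rcases (hA2 y a).mp hy' with h1 | h1
        · refine hsup ?_
          rw [SimpleGraph.Walk.support_cons]
          exact List.mem_cons_of_mem _ (h1 ▸ q.start_mem_support)
        · exact hb (by rwa [hpa'] at h1)
  -- path lemma T' : ancestry of w propagates along a walk avoiding pa w
  have T' : ∀ (w : U) (b c : U) (q : G.Walk b c), pa w ∉ q.support →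
      (∃ k, pa^[k] b = w) → (∃ k, pa^[k] c = w) := by
    intro w b c q
    induction q with
    | nil => exact fun _ h => h
    | @cons x y cc h q ih =>
      intro hsup hb
      have hy : pa w ∉ q.support := fun hmem => hsup (by simp [hmem])
      apply ih hy
      rcases hadj _ _ h with ⟨hne, ⟨hxr, hpa'⟩ | ⟨hyr, hpa'⟩⟩
      · rcases (hA2 x w).mp hb with h1 | h1
        · exfalso
          apply hsup
          have hwy : pa w = y := by rw [h1, hpa']
          rw [SimpleGraph.Walk.support_cons]
          exact List.mem_cons_of_mem _ (hwy ▸ q.start_mem_support)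
        · rwa [hpa'] at h1
      · obtain ⟨k, hk⟩ := hb
        exact ⟨k + 1, by rwa [Function.iterate_succ_apply, hpa']⟩
  -- the key three-point identity
  have step : ∀ (a x c : U) (h : G.Adj a x) (q : G.Walk x c), a ∉ q.support →
      covar μ (Z a) (Z c) * variance (Z x) μ
        = covar μ (Z a) (Z x) * covar μ (Z x) (Z c) := by
    intro a x c h q hsup
    rcases hadj _ _ h with ⟨hne, ⟨har, hpa'⟩ | ⟨hxr, hpa'⟩⟩
    · -- case A : pa a = x
      have hnx : ¬ ∃ k, pa^[k] x = a := by rw [← hpa']; exact hnotanc a har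
      have hnc : ¬ ∃ k, pa^[k] c = a := T a x c q hsup hnx
      have key : ∀ y : U, ¬ (∃ k, pa^[k] y = a) →
          ∫ ω, Z a ω * Z y ω ∂μ = lam a * ∫ ω, Z x ω * Z y ω ∂μ := by
        intro y hy
        rw [hZ a har, hpa']
        have heq : (fun ω => (lam a * Z x ω + ε a ω) * Z y ω)
            = fun ω => lam a * (Z x ω * Z y ω) + ε a ω * Z y ω := by
          funext ω; ring
        show ∫ ω, (lam a * Z x ω + ε a ω) * Z y ω ∂μ = _
        rw [heq, integral_add ((myIntegrableMul (hZL2 x) (hZL2 y)).const_mul _)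
          (myIntegrableMul (hL2 a) (hZL2 y)), integral_const_mul, orth a y hy]
        ring
      rw [covar_eq, covar_eq, covar_eq, var_eq, key x hnx, key c hnc]
      ring
    · -- case B : pa x = a
      have hanc : ∃ k, pa^[k] c = x := by
        apply T' x x c q (by rwa [hpa'])
        exact ⟨0, rfl⟩
      set t := Nat.find hanc with ht_def
      have htw : pa^[t] c = x := Nat.find_spec hanc
      have hmin : ∀ k, k < t → pa^[k] c ≠ x := fun k hk => Nat.find_min hanc hk
      have hjr : ∀ j, j < t → pa^[j] c ≠ r := by
        intro j hj hjr'
        apply hmin j hj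
        have hxr2 : x = r := by
          rw [← htw]
          have : t = (t - j) + j := by omega
          rw [this, Function.iterate_add_apply, hjr', Function.iterate_fixed hpar]
        rw [hjr', hxr2]
      have hdep : ∀ k, k < t → d x < d (pa^[k] c) := by
        intro k hk
        have h1 : ∀ j, j < t - k → pa^[j] (pa^[k] c) ≠ r := by
          intro j hj
          rw [← Function.iterate_add_apply]
          exact hjr (j + k) (by omega)
        have h2 := hddrop (t - k) (pa^[k] c) h1
        rw [← Function.iterate_add_apply] at h2
        have h3 : t - k + k = t := by omega
        rw [h3, htw] at h2
        omega
      have hnotx : ∀ k, k < t → ¬ ∃ m, pa^[m] x = pa^[k] c := by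
        intro k hk hm
        have := hdanc _ _ hm
        have := hdep k hk
        omega
      have hnota : ∀ k, k < t → ¬ ∃ m, pa^[m] a = pa^[k] c := by
        intro k hk hm
        have h1 := hdanc _ _ hm
        have h2 := hdep k hk
        have h3 := hdlt x hxr
        rw [hpa'] at h3
        omega
      have hun := unroll t c hjr
      rw [htw] at hun
      set L := ∏ j ∈ Finset.range t, lam (pa^[j] c) with hL
      have key : ∀ y : U, (∀ k, k < t → ¬ ∃ m, pa^[m] y = pa^[k] c) →
          ∫ ω, Z c ω * Z y ω ∂μ = L * ∫ ω, Z x ω * Z y ω ∂μ := by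
        intro y hy
        rw [hun]
        have heq : (fun ω => (L * Z x ω
              + ∑ k ∈ Finset.range t, (∏ j ∈ Finset.range k, lam (pa^[j] c)) * ε (pa^[k] c) ω)
                * Z y ω)
            = fun ω => L * (Z x ω * Z y ω)
              + ∑ k ∈ Finset.range t, (∏ j ∈ Finset.range k, lam (pa^[j] c))
                  * (ε (pa^[k] c) ω * Z y ω) := by
          funext ω
          rw [add_mul, Finset.sum_mul]
          congr 1
          · ring
          · exact Finset.sum_congr rfl fun k _ => by ring
        show ∫ ω, (L * Z x ω + _) * Z y ω ∂μ = _
        rw [heq, integral_add ((myIntegrableMul (hZL2 x) (hZL2 y)).const_mul _)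
          (integrable_finset_sum _ (fun k _ =>
            (myIntegrableMul (hL2 (pa^[k] c)) (hZL2 y)).const_mul _)),
          integral_const_mul, integral_finset_sum _ (fun k _ =>
            (myIntegrableMul (hL2 (pa^[k] c)) (hZL2 y)).const_mul _)]
        have hz : ∀ k ∈ Finset.range t,
            ∫ ω, (∏ j ∈ Finset.range k, lam (pa^[j] c)) * (ε (pa^[k] c) ω * Z y ω) ∂μ = 0 := by
          intro k hk
          rw [integral_const_mul, orth (pa^[k] c) y (hy k (Finset.mem_range.mp hk))]
          ring
        rw [Finset.sum_congr rfl hz, Finset.sum_const, smul_zero, add_zero]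
      have k1 := key a hnota
      have k2 := key x hnotx
      rw [covar_eq, covar_eq, covar_eq, var_eq, intcomm (Z a) (Z c), k1,
        intcomm (Z x) (Z c), k2, intcomm (Z a) (Z x)]
      ring
  -- main induction on the path
  have main : ∀ (a c : U) (q : G.Walk a c), q.IsPath → a ≠ c →
      (covar μ (Z a) (Z c) *
          (q.support.tail.dropLast.map (fun w => variance (Z w) μ)).prod =
        ((q.support.zip q.support.tail).map (fun pr => covar μ (Z pr.1) (Z pr.2))).prod ∧
      ((∀ w : U, variance (Z w) μ ≠ 0) →
        covar μ (Z a) (Z c) /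
            (Real.sqrt (variance (Z a) μ) * Real.sqrt (variance (Z c) μ)) =
          ((q.support.zip q.support.tail).map (fun pr =>
            covar μ (Z pr.1) (Z pr.2) /
              (Real.sqrt (variance (Z pr.1) μ) * Real.sqrt (variance (Z pr.2) μ)))).prod)) := by
    intro a c q
    induction q with
    | nil => exact fun _ hne => absurd rfl hne
    | @cons a x c h q ih =>
      intro hp' _
      rw [SimpleGraph.Walk.cons_isPath_iff] at hp'
      have hstep := step a x c h q hp'.2
      cases q with
      | nil =>
        constructor
        · simp
        · intro _
          simp
      | @cons _ y _ h' q' =>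
        have hq'path := hp'.1
        have hxc : x ≠ c := by
          intro hh
          rw [SimpleGraph.Walk.cons_isPath_iff] at hq'path
          exact hq'path.2 (hh ▸ q'.end_mem_support)
        obtain ⟨ih1, ih2⟩ := ih hp'.1 hxc
        obtain ⟨y', l, hsup'⟩ : ∃ y' l, q'.support = y' :: l :=
          ⟨_, _, q'.support_eq_cons⟩
        simp only [SimpleGraph.Walk.support_cons, List.tail_cons, List.zip_cons_cons,
          List.map_cons, List.prod_cons, hsup', List.dropLast_cons₂] at ih1 ih2 ⊢
        constructor
        · linear_combination
            ((List.map (fun w => variance (Z w) μ) (y' :: l).dropLast).prod) * hstep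
              + covar μ (Z a) (Z x) * ih1
        · intro hvar
          rw [← ih2 hvar]
          have hvx : 0 < variance (Z x) μ :=
            lt_of_le_of_ne (variance_nonneg _ _) (Ne.symm (hvar x))
          have hva : 0 < variance (Z a) μ :=
            lt_of_le_of_ne (variance_nonneg _ _) (Ne.symm (hvar a))
          have hvc : 0 < variance (Z c) μ :=
            lt_of_le_of_ne (variance_nonneg _ _) (Ne.symm (hvar c))
          have hsq : Real.sqrt (variance (Z x) μ) * Real.sqrt (variance (Z x) μ)
              = variance (Z x) μ := Real.mul_self_sqrt (variance_nonneg _ _)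
          have hsx : Real.sqrt (variance (Z x) μ) ≠ 0 := ne_of_gt (Real.sqrt_pos.mpr hvx)
          have hsa : Real.sqrt (variance (Z a) μ) ≠ 0 := ne_of_gt (Real.sqrt_pos.mpr hva)
          have hsc : Real.sqrt (variance (Z c) μ) ≠ 0 := ne_of_gt (Real.sqrt_pos.mpr hvc)
          rw [← hsq] at hstep
          field_simp
          linear_combination hstep
  exact main u v p hp huv
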